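/- arXiv:1512.08120 — 2 statements merged into one kernel-verified Lean document; each statement's English description precedes it below -/
import Mathlib

section
/- Let X ∈ ℝ^{I₁×I₂×I₃} be a third-order tensor and G ∈ ℝ^{d₁×d₂×d₃} a tensor such that X = G ×₁ U ×₂ V ×₃ W, where U ∈ ℝ^{I₁×d₁}, V ∈ ℝ^{I₂×d₂}, W ∈ ℝ^{I₃×d₃} are column-orthonormal (UᵀU = I_{d₁}, VᵀV = I_{d₂}, WᵀW = I_{d₃}). Then for every 0 < p < ∞, the tensor Schatten p-norms satisfy ‖X‖_{S_p} = ‖G‖_{S_p}. -/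
open scoped BigOperators
open Matrix Kronecker Filter Topology

/-- A third-order real tensor of size `I₁ × I₂ × I₃`. -/
abbrev Tensor (I₁ I₂ I₃ : ℕ) : Type := Fin I₁ → Fin I₂ → Fin I₃ → ℝ

namespace Tensor

variable {I₁ I₂ I₃ J d₁ d₂ d₃ : ℕ}

/-- The 1-mode product `X ×₁ U`. -/
noncomputable def mode1 (X : Tensor I₁ I₂ I₃) (U : Matrix (Fin J) (Fin I₁) ℝ) : Tensor J I₂ I₃ :=
  fun j i₂ i₃ => ∑ i₁, X i₁ i₂ i₃ * U j i₁

/-- The 2-mode product `X ×₂ V`. -/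
noncomputable def mode2 (X : Tensor I₁ I₂ I₃) (V : Matrix (Fin J) (Fin I₂) ℝ) : Tensor I₁ J I₃ :=
  fun i₁ j i₃ => ∑ i₂, X i₁ i₂ i₃ * V j i₂

/-- The 3-mode product `X ×₃ W`. -/
noncomputable def mode3 (X : Tensor I₁ I₂ I₃) (W : Matrix (Fin J) (Fin I₃) ℝ) : Tensor I₁ I₂ J :=
  fun i₁ i₂ j => ∑ i₃, X i₁ i₂ i₃ * W j i₃

/-- `G ×₁ U ×₂ V ×₃ W`. -/
noncomputable def tucker (G : Tensor d₁ d₂ d₃) (U : Matrix (Fin I₁) (Fin d₁) ℝ)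
    (V : Matrix (Fin I₂) (Fin d₂) ℝ) (W : Matrix (Fin I₃) (Fin d₃) ℝ) : Tensor I₁ I₂ I₃ :=
  mode3 (mode2 (mode1 G U) V) W

/-- Mode-1 unfolding `X₍₁₎`; columns are indexed by pairs `(i₃, i₂)` (with `i₂` varying fastest,
matching `j = 1 + (i₂ - 1) + (i₃ - 1)·I₂`). -/
def unfold1 (X : Tensor I₁ I₂ I₃) : Matrix (Fin I₁) (Fin I₃ × Fin I₂) ℝ :=
  fun i₁ p => X i₁ p.2 p.1

/-- Mode-2 unfolding `X₍₂₎`; columns indexed by `(i₃, i₁)` with `i₁` fastest. -/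
def unfold2 (X : Tensor I₁ I₂ I₃) : Matrix (Fin I₂) (Fin I₃ × Fin I₁) ℝ :=
  fun i₂ p => X p.2 i₂ p.1

/-- Mode-3 unfolding `X₍₃₎`; columns indexed by `(i₂, i₁)` with `i₁` fastest. -/
def unfold3 (X : Tensor I₁ I₂ I₃) : Matrix (Fin I₃) (Fin I₂ × Fin I₁) ℝ :=
  fun i₃ p => X p.2 p.1 i₃

/-- Refolding of a mode-1 unfolded matrix back into a tensor. -/
def refold1 (M : Matrix (Fin d₁) (Fin d₃ × Fin d₂) ℝ) : Tensor d₁ d₂ d₃ :=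
  fun i₁ i₂ i₃ => M i₁ (i₃, i₂)

/-- Refolding of a mode-2 unfolded matrix back into a tensor. -/
def refold2 (M : Matrix (Fin d₂) (Fin d₃ × Fin d₁) ℝ) : Tensor d₁ d₂ d₃ :=
  fun i₁ i₂ i₃ => M i₂ (i₃, i₁)

/-- Refolding of a mode-3 unfolded matrix back into a tensor. -/
def refold3 (M : Matrix (Fin d₃) (Fin d₂ × Fin d₁) ℝ) : Tensor d₁ d₂ d₃ :=
  fun i₁ i₂ i₃ => M i₃ (i₂, i₁)

/-- Tensor inner product `⟨A, B⟩`. -/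
def tinner (A B : Tensor I₁ I₂ I₃) : ℝ := ∑ i₁, ∑ i₂, ∑ i₃, A i₁ i₂ i₃ * B i₁ i₂ i₃

/-- Squared Frobenius norm `‖X‖²_F`. -/
def frobSq (X : Tensor I₁ I₂ I₃) : ℝ := ∑ i₁, ∑ i₂, ∑ i₃, (X i₁ i₂ i₃) ^ 2

/-- Frobenius norm `‖X‖_F`. -/
noncomputable def frob (X : Tensor I₁ I₂ I₃) : ℝ := Real.sqrt (frobSq X)

/-- Hadamard (entrywise) product of tensors. -/
def hadamard (A B : Tensor I₁ I₂ I₃) : Tensor I₁ I₂ I₃ := fun i₁ i₂ i₃ => A i₁ i₂ i₃ * B i₁ i₂ i₃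

/-- `P_Ω(X)`: agrees with `X` on `Ω` and is zero elsewhere. -/
def proj (Ω : Set (Fin I₁ × Fin I₂ × Fin I₃)) [DecidablePred (· ∈ Ω)] (X : Tensor I₁ I₂ I₃) :
    Tensor I₁ I₂ I₃ := fun i₁ i₂ i₃ => if (i₁, i₂, i₃) ∈ Ω then X i₁ i₂ i₃ else 0

/-- `P_Ω^⊥(X) = X - P_Ω(X)`. -/
def projc (Ω : Set (Fin I₁ × Fin I₂ × Fin I₃)) [DecidablePred (· ∈ Ω)] (X : Tensor I₁ I₂ I₃) :
    Tensor I₁ I₂ I₃ := X - proj Ω X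

/-- The 0/1 indicator tensor of an index set `Ω`. -/
def indic (Ω : Set (Fin I₁ × Fin I₂ × Fin I₃)) [DecidablePred (· ∈ Ω)] : Tensor I₁ I₂ I₃ :=
  fun i₁ i₂ i₃ => if (i₁, i₂, i₃) ∈ Ω then 1 else 0

end Tensor

namespace MatrixAux

/-- The singular values of a real matrix `M`: square roots of the eigenvalues of `MᴴM`
(for real matrices `Mᴴ = Mᵀ`). -/
noncomputable def singularValues {m n : Type*} [Fintype m] [Fintype n] [DecidableEq n]
    (M : Matrix m n ℝ) : n → ℝ :=
  fun i => Real.sqrt ((Matrix.isHermitian_conjTranspose_mul_self M).eigenvalues i)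

/-- The Schatten `p`-norm of a real matrix, `(∑ᵢ σᵢᵖ)^(1/p)`. -/
noncomputable def schattenNorm (p : ℝ) {m n : Type*} [Fintype m] [Fintype n] [DecidableEq n]
    (M : Matrix m n ℝ) : ℝ :=
  (∑ i, singularValues M i ^ p) ^ (1 / p)

/-- The trace norm (nuclear norm) of a real matrix: the sum of its singular values. -/
noncomputable def traceNorm {m n : Type*} [Fintype m] [Fintype n] [DecidableEq n]
    (M : Matrix m n ℝ) : ℝ :=
  ∑ i, singularValues M i

/-- Squared Frobenius norm of a matrix. -/
def frobSq {m n : Type*} [Fintype m] [Fintype n] (M : Matrix m n ℝ) : ℝ := ∑ i, ∑ j, (M i j) ^ 2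

/-- Frobenius norm of a matrix. -/
noncomputable def frob {m n : Type*} [Fintype m] [Fintype n] (M : Matrix m n ℝ) : ℝ :=
  Real.sqrt (frobSq M)

/-- Frobenius (trace) inner product of matrices. -/
def minner {m n : Type*} [Fintype m] [Fintype n] (A B : Matrix m n ℝ) : ℝ :=
  ∑ i, ∑ j, A i j * B i j

end MatrixAux

/-- The Schatten `p`-norm of a third-order tensor: the average of the Schatten `p`-norms of its
three mode-`n` unfoldings. -/
noncomputable def tensorSchattenNorm (p : ℝ) {I₁ I₂ I₃ : ℕ} (X : Tensor I₁ I₂ I₃) : ℝ :=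
  (MatrixAux.schattenNorm p (Tensor.unfold1 X) + MatrixAux.schattenNorm p (Tensor.unfold2 X)
    + MatrixAux.schattenNorm p (Tensor.unfold3 X)) / 3


section AuxProof
open Matrix Polynomial

lemma real_conjT {a b : Type*} (M : Matrix a b ℝ) : Mᴴ = Mᵀ := by
  ext i j; simp [Matrix.conjTranspose_apply]

section Key
variable {m n : Type*} [Fintype m] [Fintype n] [DecidableEq m] [DecidableEq n]

lemma eig_congr {A B : Matrix n n ℝ} (hA : A.IsHermitian) (hB : B.IsHermitian)
    (h : A = B) : hA.eigenvalues = hB.eigenvalues := by subst h; rfl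

lemma det_smul_one_add {S : Matrix n n ℝ} (hS : S.IsHermitian) (x : ℝ) :
    (x • (1 : Matrix n n ℝ) + S).det = ∏ i, (x + hS.eigenvalues i) := by
  have hU1 : (hS.eigenvectorUnitary : Matrix n n ℝ) * star (hS.eigenvectorUnitary : Matrix n n ℝ) = 1 :=
    Unitary.mul_star_self_of_mem hS.eigenvectorUnitary.2
  have key : x • (1 : Matrix n n ℝ) + S
      = (hS.eigenvectorUnitary : Matrix n n ℝ) *
        (x • 1 + diagonal (RCLike.ofReal ∘ hS.eigenvalues)) *
        star (hS.eigenvectorUnitary : Matrix n n ℝ) := by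
    rw [Matrix.mul_add, Matrix.add_mul]
    nth_rewrite 1 [hS.spectral_theorem]
    congr 1
    rw [Matrix.mul_smul, Matrix.mul_one, Matrix.smul_mul, hU1]
  rw [key, Matrix.det_mul, Matrix.det_mul]
  have : (hS.eigenvectorUnitary : Matrix n n ℝ).det * (star (hS.eigenvectorUnitary : Matrix n n ℝ)).det = 1 := by
    rw [← Matrix.det_mul, hU1, Matrix.det_one]
  rw [mul_comm, ← mul_assoc, mul_comm (star (hS.eigenvectorUnitary : Matrix n n ℝ)).det, this, one_mul]
  rw [Matrix.smul_one_eq_diagonal, Matrix.diagonal_add, Matrix.det_diagonal]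
  rfl

lemma prod_eig_fun (A : Matrix m n ℝ) (x : ℝ) :
    (∏ i, (x + (isHermitian_conjTranspose_mul_self A).eigenvalues i)) * x ^ (Fintype.card m)
    = (∏ j, (x + (isHermitian_conjTranspose_mul_self Aᵀ).eigenvalues j)) * x ^ (Fintype.card n) := by
  have H : (fun x : ℝ => (∏ i, (x + (isHermitian_conjTranspose_mul_self A).eigenvalues i)) * x ^ (Fintype.card m))
      = fun x : ℝ => (∏ j, (x + (isHermitian_conjTranspose_mul_self Aᵀ).eigenvalues j)) * x ^ (Fintype.card n) := by
    apply Continuous.ext_on (dense_compl_singleton (0:ℝ))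
    · fun_prop
    · fun_prop
    · intro x hx
      have hx : x ≠ 0 := hx
      simp only
      rw [← det_smul_one_add (isHermitian_conjTranspose_mul_self A) x,
          ← det_smul_one_add (isHermitian_conjTranspose_mul_self Aᵀ) x]
      have e0 : Aᵀᴴ * Aᵀ = A * Aᴴ := by
        rw [real_conjT, real_conjT, Matrix.transpose_transpose]
      have e1 : x • (1 : Matrix n n ℝ) + Aᴴ * A = x • (1 + (x⁻¹ • Aᴴ) * A) := by
        rw [smul_add, Matrix.smul_mul, smul_smul, mul_inv_cancel₀ hx, one_smul]
      have e2 : x • (1 : Matrix m m ℝ) + Aᵀᴴ * Aᵀ = x • (1 + A * (x⁻¹ • Aᴴ)) := by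
        rw [e0, smul_add, Matrix.mul_smul, smul_smul, mul_inv_cancel₀ hx, one_smul]
      rw [e1, e2, Matrix.det_smul, Matrix.det_smul, Matrix.det_one_add_mul_comm]
      ring
  exact congrFun H x

lemma multiset_eig_eq (A : Matrix m n ℝ) :
    Finset.univ.val.map (isHermitian_conjTranspose_mul_self A).eigenvalues
      + Multiset.replicate (Fintype.card m) (0:ℝ)
    = Finset.univ.val.map (isHermitian_conjTranspose_mul_self Aᵀ).eigenvalues
      + Multiset.replicate (Fintype.card n) (0:ℝ) := by
  set M₁ := Finset.univ.val.map (isHermitian_conjTranspose_mul_self A).eigenvalues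
      + Multiset.replicate (Fintype.card m) (0:ℝ) with hM₁
  set M₂ := Finset.univ.val.map (isHermitian_conjTranspose_mul_self Aᵀ).eigenvalues
      + Multiset.replicate (Fintype.card n) (0:ℝ) with hM₂
  have heval : ∀ (M : Multiset ℝ) (x : ℝ),
      eval x ((M.map Neg.neg).map (fun a => X - C a)).prod = (M.map (fun a => x + a)).prod := by
    intro M x
    rw [eval_multiset_prod, Multiset.map_map, Multiset.map_map]
    congr 1
    apply Multiset.map_congr rfl
    intro a _
    simp [sub_neg_eq_add]
  have hprod : ∀ x : ℝ, (M₁.map (fun a => x + a)).prod = (M₂.map (fun a => x + a)).prod := by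
    intro x
    rw [hM₁, hM₂, Multiset.map_add, Multiset.map_add, Multiset.prod_add, Multiset.prod_add,
      Multiset.map_replicate, Multiset.map_replicate, Multiset.prod_replicate,
      Multiset.prod_replicate, add_zero]
    have h1 : (Multiset.map (fun a => x + a) (Finset.univ.val.map (isHermitian_conjTranspose_mul_self A).eigenvalues)).prod
        = ∏ i, (x + (isHermitian_conjTranspose_mul_self A).eigenvalues i) := by
      rw [Multiset.map_map, Finset.prod_eq_multiset_prod]; rfl
    have h2 : (Multiset.map (fun a => x + a) (Finset.univ.val.map (isHermitian_conjTranspose_mul_self Aᵀ).eigenvalues)).prod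
        = ∏ j, (x + (isHermitian_conjTranspose_mul_self Aᵀ).eigenvalues j) := by
      rw [Multiset.map_map, Finset.prod_eq_multiset_prod]; rfl
    rw [h1, h2]
    exact prod_eig_fun A x
  have hP : ((M₁.map Neg.neg).map (fun a => X - C a)).prod
      = ((M₂.map Neg.neg).map (fun a => X - C a)).prod := by
    apply Polynomial.funext
    intro x
    rw [heval, heval]; exact hprod x
  have := congrArg Polynomial.roots hP
  rw [roots_multiset_prod_X_sub_C, roots_multiset_prod_X_sub_C] at this
  exact Multiset.map_injective neg_injective this

lemma sum_f_eig (A : Matrix m n ℝ) (f : ℝ → ℝ) (hf : f 0 = 0) :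
    ∑ i, f ((isHermitian_conjTranspose_mul_self A).eigenvalues i)
    = ∑ j, f ((isHermitian_conjTranspose_mul_self Aᵀ).eigenvalues j) := by
  have := congrArg (fun M : Multiset ℝ => (M.map f).sum) (multiset_eig_eq A)
  simp only [Multiset.map_add, Multiset.sum_add, Multiset.map_replicate, Multiset.sum_replicate,
    hf, smul_zero, add_zero, Multiset.map_map] at this
  rw [Finset.sum_eq_multiset_sum, Finset.sum_eq_multiset_sum]
  exact this
end Key

lemma schatten_gram {m m' n : Type*} [Fintype m] [Fintype m'] [Fintype n] [DecidableEq n]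
    {A : Matrix m n ℝ} {B : Matrix m' n ℝ} (h : Aᴴ * A = Bᴴ * B) (p : ℝ) :
    MatrixAux.schattenNorm p A = MatrixAux.schattenNorm p B := by
  unfold MatrixAux.schattenNorm MatrixAux.singularValues
  rw [eig_congr (isHermitian_conjTranspose_mul_self A) (isHermitian_conjTranspose_mul_self B) h]

lemma schatten_transpose {m n : Type*} [Fintype m] [Fintype n] [DecidableEq m] [DecidableEq n]
    (A : Matrix m n ℝ) {p : ℝ} (hp : p ≠ 0) :
    MatrixAux.schattenNorm p Aᵀ = MatrixAux.schattenNorm p A := by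
  unfold MatrixAux.schattenNorm MatrixAux.singularValues
  congr 1
  exact (sum_f_eig A (fun x => Real.sqrt x ^ p) (by simp [Real.zero_rpow hp])).symm

lemma schatten_sandwich {a b c d : Type*} [Fintype a] [Fintype b] [Fintype c] [Fintype d]
    [DecidableEq a] [DecidableEq b] [DecidableEq d]
    (M : Matrix a b ℝ) (U : Matrix c a ℝ) (Q : Matrix d b ℝ)
    (hU : Uᵀ * U = 1) (hQ : Qᵀ * Q = 1) {p : ℝ} (hp : p ≠ 0) :
    MatrixAux.schattenNorm p (U * M * Qᵀ) = MatrixAux.schattenNorm p M := by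
  have s1 : MatrixAux.schattenNorm p (U * M * Qᵀ) = MatrixAux.schattenNorm p (M * Qᵀ) := by
    apply schatten_gram
    rw [real_conjT, real_conjT]
    simp only [Matrix.transpose_mul, Matrix.mul_assoc]
    rw [← Matrix.mul_assoc Uᵀ U, hU, Matrix.one_mul]
  have s2 : MatrixAux.schattenNorm p (M * Qᵀ) = MatrixAux.schattenNorm p (Q * Mᵀ) := by
    rw [← schatten_transpose (M * Qᵀ) hp, Matrix.transpose_mul, Matrix.transpose_transpose]
  have s3 : MatrixAux.schattenNorm p (Q * Mᵀ) = MatrixAux.schattenNorm p Mᵀ := by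
    apply schatten_gram
    rw [real_conjT, real_conjT]
    simp only [Matrix.transpose_mul, Matrix.mul_assoc, Matrix.transpose_transpose]
    rw [← Matrix.mul_assoc Qᵀ Q, hQ, Matrix.one_mul]
  rw [s1, s2, s3, schatten_transpose M hp]

/-- Kronecker-style pairing of two matrices. -/
def pairMat {a b c d : ℕ} (W : Matrix (Fin a) (Fin c) ℝ) (V : Matrix (Fin b) (Fin d) ℝ) :
    Matrix (Fin a × Fin b) (Fin c × Fin d) ℝ :=
  fun p q => W p.1 q.1 * V p.2 q.2

lemma pairMat_orth {a b c d : ℕ} {W : Matrix (Fin a) (Fin c) ℝ} {V : Matrix (Fin b) (Fin d) ℝ}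
    (hW : Wᵀ * W = 1) (hV : Vᵀ * V = 1) : (pairMat W V)ᵀ * pairMat W V = 1 := by
  ext q q'
  have hW' := congrFun (congrFun hW q.1) q'.1
  have hV' := congrFun (congrFun hV q.2) q'.2
  simp only [Matrix.mul_apply, Matrix.transpose_apply, Matrix.one_apply] at hW' hV' ⊢
  rw [Fintype.sum_prod_type]
  simp only [pairMat]
  have : ∀ i₁ : Fin a, ∑ i₂ : Fin b, (W i₁ q.1 * V i₂ q.2) * (W i₁ q'.1 * V i₂ q'.2)
      = (W i₁ q.1 * W i₁ q'.1) * ∑ i₂ : Fin b, V i₂ q.2 * V i₂ q'.2 := by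
    intro i₁; rw [Finset.mul_sum]; apply Finset.sum_congr rfl; intro i₂ _; ring
  rw [Finset.sum_congr rfl (fun i₁ _ => this i₁), ← Finset.sum_mul, hW', hV']
  rcases eq_or_ne q q' with h | h
  · subst h; simp
  · rcases eq_or_ne q.1 q'.1 with h1 | h1
    · have h2 : q.2 ≠ q'.2 := fun h2 => h (Prod.ext h1 h2)
      simp [h, h1, h2]
    · simp [h, h1]

lemma unfold1_tucker {I₁ I₂ I₃ d₁ d₂ d₃ : ℕ} (G : Tensor d₁ d₂ d₃)
    (U : Matrix (Fin I₁) (Fin d₁) ℝ) (V : Matrix (Fin I₂) (Fin d₂) ℝ)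
    (W : Matrix (Fin I₃) (Fin d₃) ℝ) :
    Tensor.unfold1 (Tensor.tucker G U V W) = U * Tensor.unfold1 G * (pairMat W V)ᵀ := by
  ext i₁ p
  simp only [Tensor.unfold1, Tensor.tucker, Tensor.mode1, Tensor.mode2, Tensor.mode3,
    Matrix.mul_apply, Matrix.transpose_apply, pairMat, Fintype.sum_prod_type,
    Finset.sum_mul, Finset.mul_sum]
  apply Finset.sum_congr rfl; intro a₃ _
  apply Finset.sum_congr rfl; intro a₂ _
  apply Finset.sum_congr rfl; intro a₁ _
  ring

lemma unfold2_tucker {I₁ I₂ I₃ d₁ d₂ d₃ : ℕ} (G : Tensor d₁ d₂ d₃)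
    (U : Matrix (Fin I₁) (Fin d₁) ℝ) (V : Matrix (Fin I₂) (Fin d₂) ℝ)
    (W : Matrix (Fin I₃) (Fin d₃) ℝ) :
    Tensor.unfold2 (Tensor.tucker G U V W) = V * Tensor.unfold2 G * (pairMat W U)ᵀ := by
  ext i₂ p
  simp only [Tensor.unfold2, Tensor.tucker, Tensor.mode1, Tensor.mode2, Tensor.mode3,
    Matrix.mul_apply, Matrix.transpose_apply, pairMat, Fintype.sum_prod_type,
    Finset.sum_mul, Finset.mul_sum]
  apply Finset.sum_congr rfl; intro a₃ _
  rw [Finset.sum_comm]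
  apply Finset.sum_congr rfl; intro a₂ _
  apply Finset.sum_congr rfl; intro a₁ _
  ring

lemma unfold3_tucker {I₁ I₂ I₃ d₁ d₂ d₃ : ℕ} (G : Tensor d₁ d₂ d₃)
    (U : Matrix (Fin I₁) (Fin d₁) ℝ) (V : Matrix (Fin I₂) (Fin d₂) ℝ)
    (W : Matrix (Fin I₃) (Fin d₃) ℝ) :
    Tensor.unfold3 (Tensor.tucker G U V W) = W * Tensor.unfold3 G * (pairMat V U)ᵀ := by
  ext i₃ p
  simp only [Tensor.unfold3, Tensor.tucker, Tensor.mode1, Tensor.mode2, Tensor.mode3,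
    Matrix.mul_apply, Matrix.transpose_apply, pairMat, Fintype.sum_prod_type,
    Finset.sum_mul, Finset.mul_sum]
  conv_lhs => rw [Finset.sum_comm]
  apply Finset.sum_congr rfl; intro a₃ _
  rw [Finset.sum_comm]
  apply Finset.sum_congr rfl; intro a₂ _
  apply Finset.sum_congr rfl; intro a₁ _
  ring

end AuxProof

/-- If `X = G ×₁ U ×₂ V ×₃ W` with column-orthonormal `U, V, W`, then for every
`0 < p < ∞` the tensor Schatten `p`-norms of `X` and of its core tensor `G` coincide. -/
theorem schattenNorm_tensor_tucker_eq {I₁ I₂ I₃ d₁ d₂ d₃ : ℕ}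
    (X : Tensor I₁ I₂ I₃) (G : Tensor d₁ d₂ d₃)
    (U : Matrix (Fin I₁) (Fin d₁) ℝ) (V : Matrix (Fin I₂) (Fin d₂) ℝ)
    (W : Matrix (Fin I₃) (Fin d₃) ℝ)
    (hX : X = Tensor.tucker G U V W)
    (hU : Uᵀ * U = 1) (hV : Vᵀ * V = 1) (hW : Wᵀ * W = 1) :
    ∀ p : ℝ, 0 < p → tensorSchattenNorm p X = tensorSchattenNorm p G := by
  intro p hp
  have hp' : p ≠ 0 := ne_of_gt hp
  subst hX
  unfold tensorSchattenNorm
  rw [unfold1_tucker, unfold2_tucker, unfold3_tucker,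
    schatten_sandwich _ U (pairMat W V) hU (pairMat_orth hW hV) hp',
    schatten_sandwich _ V (pairMat W U) hV (pairMat_orth hW hU) hp',
    schatten_sandwich _ W (pairMat V U) hW (pairMat_orth hV hU) hp']
end

section
/- Fix ρ > 0, a tensor T ∈ ℝ^{I₁×I₂×I₃}, and matrices C_n ∈ ℝ^{d_n × ∏_{j≠n} d_j} for n = 1,2,3, and set B = Σ_{n=1}^{3} refold_n(C_n). For column-orthonormal U, V, W, let C = T ×₁ Uᵀ ×₂ Vᵀ ×₃ Wᵀ, and let f(U,V,W) = min over G ∈ ℝ^{d₁×d₂×d₃} of [ Σ_{n=1}^{3} (ρ/2)‖G_{(n)} − C_n‖²_F + (1/2)‖T − G ×₁ U ×₂ V ×₃ W‖²_F ]. Then f(U,V,W) = (ρ/2) Σ_{n=1}^{3} ‖C_n‖²_F + (1/2)‖T‖²_F − (1/(2(3ρ+1))) ‖ρ B + C‖²_F, with the minimizing G equal to (ρ B + C)/(3ρ+1); hence minimizing f over column-orthonormal (U,V,W) is equivalent to maximizing g(U,V,W) = ‖C + ρ B‖²_F over column-orthonormal (U,V,W). -/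
open scoped BigOperators
open Matrix Kronecker Filter Topology

namespace Tensor
variable {I₁ I₂ I₃ J d₁ d₂ d₃ : ℕ}

lemma sum_swap₃ {α β γ : Type*} [Fintype α] [Fintype β] [Fintype γ] (f : α → β → γ → ℝ) :
    ∑ a, ∑ b, ∑ c, f a b c = ∑ c, ∑ b, ∑ a, f a b c := by
  rw [Finset.sum_comm]
  rw [show ∑ b, ∑ a, ∑ c, f a b c = ∑ b, ∑ c, ∑ a, f a b c from
    Finset.sum_congr rfl fun b _ => Finset.sum_comm]
  exact Finset.sum_comm

lemma sum_swap₄ {α β γ δ : Type*} [Fintype α] [Fintype β] [Fintype γ] [Fintype δ]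
    (f : α → β → γ → δ → ℝ) :
    ∑ a, ∑ b, ∑ c, ∑ d, f a b c d = ∑ d, ∑ b, ∑ c, ∑ a, f a b c d := by
  have h := sum_swap₃ (fun a (p : β × γ) d => f a p.1 p.2 d)
  simpa [Fintype.sum_prod_type] using h

lemma tinner_mode1 (X : Tensor d₁ I₂ I₃) (U : Matrix (Fin I₁) (Fin d₁) ℝ) (Y : Tensor I₁ I₂ I₃) :
    tinner (mode1 X U) Y = tinner X (mode1 Y Uᵀ) := by
  simp only [tinner, mode1, Matrix.transpose_apply, Finset.sum_mul, Finset.mul_sum]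
  rw [sum_swap₄ (fun j i₂ i₃ a => X a i₂ i₃ * U j a * Y j i₂ i₃)]
  exact Finset.sum_congr rfl fun _ _ => Finset.sum_congr rfl fun _ _ =>
    Finset.sum_congr rfl fun _ _ => Finset.sum_congr rfl fun _ _ => by ring

end Tensor
namespace Tensor
variable {I₁ I₂ I₃ J d₁ d₂ d₃ : ℕ}

lemma tinner_mode2 (X : Tensor I₁ d₂ I₃) (V : Matrix (Fin I₂) (Fin d₂) ℝ) (Y : Tensor I₁ I₂ I₃) :
    tinner (mode2 X V) Y = tinner X (mode2 Y Vᵀ) := by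
  simp only [tinner, mode2, Matrix.transpose_apply, Finset.sum_mul, Finset.mul_sum]
  refine Finset.sum_congr rfl fun i₁ _ => ?_
  rw [sum_swap₃ (fun k i₃ b => X i₁ b i₃ * V k b * Y i₁ k i₃)]
  exact Finset.sum_congr rfl fun _ _ => Finset.sum_congr rfl fun _ _ =>
    Finset.sum_congr rfl fun _ _ => by ring

lemma tinner_mode3 (X : Tensor I₁ I₂ d₃) (W : Matrix (Fin I₃) (Fin d₃) ℝ) (Y : Tensor I₁ I₂ I₃) :
    tinner (mode3 X W) Y = tinner X (mode3 Y Wᵀ) := by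
  simp only [tinner, mode3, Matrix.transpose_apply, Finset.sum_mul, Finset.mul_sum]
  refine Finset.sum_congr rfl fun i₁ _ => Finset.sum_congr rfl fun i₂ _ => ?_
  rw [Finset.sum_comm]
  exact Finset.sum_congr rfl fun _ _ => Finset.sum_congr rfl fun _ _ => by ring

lemma mode2_mode1 (X : Tensor I₁ I₂ I₃) (U : Matrix (Fin J) (Fin I₁) ℝ)
    {K : ℕ} (V : Matrix (Fin K) (Fin I₂) ℝ) :
    mode2 (mode1 X U) V = mode1 (mode2 X V) U := by
  funext j k i₃
  simp only [mode1, mode2, Finset.sum_mul]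
  rw [Finset.sum_comm]
  exact Finset.sum_congr rfl fun _ _ => Finset.sum_congr rfl fun _ _ => by ring

lemma mode3_mode1 (X : Tensor I₁ I₂ I₃) (U : Matrix (Fin J) (Fin I₁) ℝ)
    {K : ℕ} (W : Matrix (Fin K) (Fin I₃) ℝ) :
    mode3 (mode1 X U) W = mode1 (mode3 X W) U := by
  funext j i₂ k
  simp only [mode1, mode3, Finset.sum_mul]
  rw [Finset.sum_comm]
  exact Finset.sum_congr rfl fun _ _ => Finset.sum_congr rfl fun _ _ => by ring

lemma mode3_mode2 (X : Tensor I₁ I₂ I₃) (V : Matrix (Fin J) (Fin I₂) ℝ)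
    {K : ℕ} (W : Matrix (Fin K) (Fin I₃) ℝ) :
    mode3 (mode2 X V) W = mode2 (mode3 X W) V := by
  funext i₁ j k
  simp only [mode2, mode3, Finset.sum_mul]
  rw [Finset.sum_comm]
  exact Finset.sum_congr rfl fun _ _ => Finset.sum_congr rfl fun _ _ => by ring

end Tensor
namespace Tensor
variable {I₁ I₂ I₃ J d₁ d₂ d₃ : ℕ}

lemma orth_entry {n d : ℕ} {U : Matrix (Fin n) (Fin d) ℝ} (hU : Uᵀ * U = 1)
    (a b : Fin d) : ∑ j, U j a * U j b = if a = b then 1 else 0 := by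
  have := congrFun (congrFun hU a) b
  simpa [Matrix.mul_apply, Matrix.one_apply, mul_comm] using this

lemma mode1_mode1 (X : Tensor d₁ I₂ I₃) {U : Matrix (Fin I₁) (Fin d₁) ℝ}
    (hU : Uᵀ * U = 1) : mode1 (mode1 X U) Uᵀ = X := by
  funext b i₂ i₃
  simp only [mode1, Matrix.transpose_apply, Finset.sum_mul]
  rw [Finset.sum_comm]
  calc ∑ a, ∑ j, X a i₂ i₃ * U j a * U j b
      = ∑ a, X a i₂ i₃ * ∑ j, U j a * U j b := by
        refine Finset.sum_congr rfl fun a _ => ?_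
        rw [Finset.mul_sum]
        exact Finset.sum_congr rfl fun j _ => by ring
    _ = X b i₂ i₃ := by
        simp [orth_entry hU, mul_ite]

lemma mode2_mode2 (X : Tensor I₁ d₂ I₃) {V : Matrix (Fin I₂) (Fin d₂) ℝ}
    (hV : Vᵀ * V = 1) : mode2 (mode2 X V) Vᵀ = X := by
  funext i₁ b i₃
  simp only [mode2, Matrix.transpose_apply, Finset.sum_mul]
  rw [Finset.sum_comm]
  calc ∑ a, ∑ j, X i₁ a i₃ * V j a * V j b
      = ∑ a, X i₁ a i₃ * ∑ j, V j a * V j b := by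
        refine Finset.sum_congr rfl fun a _ => ?_
        rw [Finset.mul_sum]
        exact Finset.sum_congr rfl fun j _ => by ring
    _ = X i₁ b i₃ := by simp [orth_entry hV, mul_ite]

lemma mode3_mode3 (X : Tensor I₁ I₂ d₃) {W : Matrix (Fin I₃) (Fin d₃) ℝ}
    (hW : Wᵀ * W = 1) : mode3 (mode3 X W) Wᵀ = X := by
  funext i₁ i₂ b
  simp only [mode3, Matrix.transpose_apply, Finset.sum_mul]
  rw [Finset.sum_comm]
  calc ∑ a, ∑ j, X i₁ i₂ a * W j a * W j b
      = ∑ a, X i₁ i₂ a * ∑ j, W j a * W j b := by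
        refine Finset.sum_congr rfl fun a _ => ?_
        rw [Finset.mul_sum]
        exact Finset.sum_congr rfl fun j _ => by ring
    _ = X i₁ i₂ b := by simp [orth_entry hW, mul_ite]

end Tensor
namespace Tensor
variable {I₁ I₂ I₃ J d₁ d₂ d₃ : ℕ}

lemma sum3_sub_sq {α β γ : Type*} [Fintype α] [Fintype β] [Fintype γ] (A B : α → β → γ → ℝ) :
    ∑ a, ∑ b, ∑ c, (A a b c - B a b c) ^ 2
      = (∑ a, ∑ b, ∑ c, (A a b c) ^ 2) - 2 * (∑ a, ∑ b, ∑ c, A a b c * B a b c)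
        + ∑ a, ∑ b, ∑ c, (B a b c) ^ 2 := by
  have h : ∀ x y : ℝ, (x - y) ^ 2 = x ^ 2 - 2 * (x * y) + y ^ 2 := fun x y => by ring
  simp only [h, Finset.sum_add_distrib, Finset.sum_sub_distrib, ← Finset.mul_sum]

lemma tinner_comm (A B : Tensor I₁ I₂ I₃) : tinner A B = tinner B A := by
  simp [tinner, mul_comm]

lemma tinner_self (A : Tensor I₁ I₂ I₃) : tinner A A = frobSq A := by
  simp [tinner, frobSq, sq]

lemma frobSq_nonneg (A : Tensor I₁ I₂ I₃) : 0 ≤ frobSq A := by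
  refine Finset.sum_nonneg fun _ _ => Finset.sum_nonneg fun _ _ => Finset.sum_nonneg fun _ _ => ?_
  positivity

lemma frobSq_sub (A B : Tensor I₁ I₂ I₃) :
    frobSq (A - B) = frobSq A - 2 * tinner A B + frobSq B := by
  simpa [frobSq, tinner, Pi.sub_apply] using sum3_sub_sq A B

lemma tinner_add_right (A B C : Tensor I₁ I₂ I₃) :
    tinner A (B + C) = tinner A B + tinner A C := by
  simp [tinner, Pi.add_apply, mul_add, Finset.sum_add_distrib]

lemma tinner_smul_right (r : ℝ) (A B : Tensor I₁ I₂ I₃) :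
    tinner A (r • B) = r * tinner A B := by
  simp [tinner, Pi.smul_apply, Finset.mul_sum, mul_left_comm]

lemma frobSq_smul (r : ℝ) (A : Tensor I₁ I₂ I₃) : frobSq (r • A) = r ^ 2 * frobSq A := by
  simp [frobSq, Pi.smul_apply, Finset.mul_sum, mul_pow]

lemma frobSq_zero : frobSq (0 : Tensor I₁ I₂ I₃) = 0 := by simp [frobSq]

end Tensor
namespace Tensor
variable {I₁ I₂ I₃ J d₁ d₂ d₃ : ℕ}

lemma tinner_tucker (G : Tensor d₁ d₂ d₃) (U : Matrix (Fin I₁) (Fin d₁) ℝ)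
    (V : Matrix (Fin I₂) (Fin d₂) ℝ) (W : Matrix (Fin I₃) (Fin d₃) ℝ) (T : Tensor I₁ I₂ I₃) :
    tinner (tucker G U V W) T = tinner G (tucker T Uᵀ Vᵀ Wᵀ) := by
  unfold tucker
  rw [tinner_mode3, tinner_mode2, tinner_mode1, mode2_mode1, mode3_mode1, mode3_mode2]

lemma tucker_tucker (G : Tensor d₁ d₂ d₃) {U : Matrix (Fin I₁) (Fin d₁) ℝ}
    {V : Matrix (Fin I₂) (Fin d₂) ℝ} {W : Matrix (Fin I₃) (Fin d₃) ℝ}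
    (hU : Uᵀ * U = 1) (hV : Vᵀ * V = 1) (hW : Wᵀ * W = 1) :
    tucker (tucker G U V W) Uᵀ Vᵀ Wᵀ = G := by
  unfold tucker
  rw [show mode1 (mode3 (mode2 (mode1 G U) V) W) Uᵀ = mode3 (mode2 (mode1 (mode1 G U) Uᵀ) V) W
      by rw [← mode3_mode1, ← mode2_mode1],
    mode1_mode1 _ hU,
    show mode2 (mode3 (mode2 G V) W) Vᵀ = mode3 (mode2 (mode2 G V) Vᵀ) W by rw [← mode3_mode2],
    mode2_mode2 _ hV, mode3_mode3 _ hW]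

lemma frobSq_tucker (G : Tensor d₁ d₂ d₃) {U : Matrix (Fin I₁) (Fin d₁) ℝ}
    {V : Matrix (Fin I₂) (Fin d₂) ℝ} {W : Matrix (Fin I₃) (Fin d₃) ℝ}
    (hU : Uᵀ * U = 1) (hV : Vᵀ * V = 1) (hW : Wᵀ * W = 1) :
    frobSq (tucker G U V W) = frobSq G := by
  rw [← tinner_self, tinner_tucker, tucker_tucker G hU hV hW, tinner_self]

lemma frobSq_unfold1 (G : Tensor d₁ d₂ d₃) (C₁ : Matrix (Fin d₁) (Fin d₃ × Fin d₂) ℝ) :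
    MatrixAux.frobSq (unfold1 G - C₁)
      = frobSq G - 2 * tinner G (refold1 C₁) + MatrixAux.frobSq C₁ := by
  have e : MatrixAux.frobSq (unfold1 G - C₁)
      = ∑ i₁, ∑ i₃, ∑ i₂, (G i₁ i₂ i₃ - C₁ i₁ (i₃, i₂)) ^ 2 := by
    simp [MatrixAux.frobSq, Fintype.sum_prod_type, unfold1, Matrix.sub_apply]
  rw [e, sum3_sub_sq (fun i₁ i₃ i₂ => G i₁ i₂ i₃) (fun i₁ i₃ i₂ => C₁ i₁ (i₃, i₂))]
  congr 1
  · congr 1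
    · exact Finset.sum_congr rfl fun _ _ => Finset.sum_comm
    · congr 1
      simp only [tinner, refold1]
      exact Finset.sum_congr rfl fun _ _ => Finset.sum_comm
  · simp [MatrixAux.frobSq, Fintype.sum_prod_type]

lemma frobSq_unfold2 (G : Tensor d₁ d₂ d₃) (C₂ : Matrix (Fin d₂) (Fin d₃ × Fin d₁) ℝ) :
    MatrixAux.frobSq (unfold2 G - C₂)
      = frobSq G - 2 * tinner G (refold2 C₂) + MatrixAux.frobSq C₂ := by
  have e : MatrixAux.frobSq (unfold2 G - C₂)
      = ∑ i₂, ∑ i₃, ∑ i₁, (G i₁ i₂ i₃ - C₂ i₂ (i₃, i₁)) ^ 2 := by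
    simp [MatrixAux.frobSq, Fintype.sum_prod_type, unfold2, Matrix.sub_apply]
  rw [e, sum3_sub_sq (fun i₂ i₃ i₁ => G i₁ i₂ i₃) (fun i₂ i₃ i₁ => C₂ i₂ (i₃, i₁))]
  congr 1
  · congr 1
    · rw [sum_swap₃ (fun i₂ i₃ i₁ => (G i₁ i₂ i₃) ^ 2)]
      exact Finset.sum_congr rfl fun _ _ => Finset.sum_comm
    · congr 1
      simp only [tinner, refold2]
      rw [sum_swap₃ (fun i₂ i₃ i₁ => G i₁ i₂ i₃ * C₂ i₂ (i₃, i₁))]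
      exact Finset.sum_congr rfl fun _ _ => Finset.sum_comm
  · simp [MatrixAux.frobSq, Fintype.sum_prod_type]

lemma frobSq_unfold3 (G : Tensor d₁ d₂ d₃) (C₃ : Matrix (Fin d₃) (Fin d₂ × Fin d₁) ℝ) :
    MatrixAux.frobSq (unfold3 G - C₃)
      = frobSq G - 2 * tinner G (refold3 C₃) + MatrixAux.frobSq C₃ := by
  have e : MatrixAux.frobSq (unfold3 G - C₃)
      = ∑ i₃, ∑ i₂, ∑ i₁, (G i₁ i₂ i₃ - C₃ i₃ (i₂, i₁)) ^ 2 := by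
    simp [MatrixAux.frobSq, Fintype.sum_prod_type, unfold3, Matrix.sub_apply]
  rw [e, sum3_sub_sq (fun i₃ i₂ i₁ => G i₁ i₂ i₃) (fun i₃ i₂ i₁ => C₃ i₃ (i₂, i₁))]
  congr 1
  · congr 1
    · exact sum_swap₃ (fun i₃ i₂ i₁ => (G i₁ i₂ i₃) ^ 2)
    · congr 1
      simp only [tinner, refold3]
      exact sum_swap₃ (fun i₃ i₂ i₁ => G i₁ i₂ i₃ * C₃ i₃ (i₂, i₁))
  · simp [MatrixAux.frobSq, Fintype.sum_prod_type]

end Tensor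
namespace Tensor
section Main
variable {I₁ I₂ I₃ d₁ d₂ d₃ : ℕ}

/-- The objective function, explicit form. -/
noncomputable def objFn (ρ : ℝ) (T : Tensor I₁ I₂ I₃)
    (C₁ : Matrix (Fin d₁) (Fin d₃ × Fin d₂) ℝ) (C₂ : Matrix (Fin d₂) (Fin d₃ × Fin d₁) ℝ)
    (C₃ : Matrix (Fin d₃) (Fin d₂ × Fin d₁) ℝ) (G : Tensor d₁ d₂ d₃)
    (U : Matrix (Fin I₁) (Fin d₁) ℝ) (V : Matrix (Fin I₂) (Fin d₂) ℝ)
    (W : Matrix (Fin I₃) (Fin d₃) ℝ) : ℝ :=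
  ρ / 2 * (MatrixAux.frobSq (Tensor.unfold1 G - C₁)
      + MatrixAux.frobSq (Tensor.unfold2 G - C₂)
      + MatrixAux.frobSq (Tensor.unfold3 G - C₃))
    + 1 / 2 * Tensor.frobSq (T - Tensor.tucker G U V W)

def Bt (C₁ : Matrix (Fin d₁) (Fin d₃ × Fin d₂) ℝ) (C₂ : Matrix (Fin d₂) (Fin d₃ × Fin d₁) ℝ)
    (C₃ : Matrix (Fin d₃) (Fin d₂ × Fin d₁) ℝ) : Tensor d₁ d₂ d₃ :=
  refold1 C₁ + refold2 C₂ + refold3 C₃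

noncomputable def Gst (ρ : ℝ) (T : Tensor I₁ I₂ I₃)
    (C₁ : Matrix (Fin d₁) (Fin d₃ × Fin d₂) ℝ) (C₂ : Matrix (Fin d₂) (Fin d₃ × Fin d₁) ℝ)
    (C₃ : Matrix (Fin d₃) (Fin d₂ × Fin d₁) ℝ)
    (U : Matrix (Fin I₁) (Fin d₁) ℝ) (V : Matrix (Fin I₂) (Fin d₂) ℝ)
    (W : Matrix (Fin I₃) (Fin d₃) ℝ) : Tensor d₁ d₂ d₃ :=
  (1 / (3 * ρ + 1)) • (ρ • Bt C₁ C₂ C₃ + tucker T Uᵀ Vᵀ Wᵀ)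

lemma key (ρ : ℝ) (hρ : 0 < ρ) (T : Tensor I₁ I₂ I₃)
    (C₁ : Matrix (Fin d₁) (Fin d₃ × Fin d₂) ℝ) (C₂ : Matrix (Fin d₂) (Fin d₃ × Fin d₁) ℝ)
    (C₃ : Matrix (Fin d₃) (Fin d₂ × Fin d₁) ℝ)
    {U : Matrix (Fin I₁) (Fin d₁) ℝ} {V : Matrix (Fin I₂) (Fin d₂) ℝ}
    {W : Matrix (Fin I₃) (Fin d₃) ℝ}
    (hU : Uᵀ * U = 1) (hV : Vᵀ * V = 1) (hW : Wᵀ * W = 1) (G : Tensor d₁ d₂ d₃) :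
    objFn ρ T C₁ C₂ C₃ G U V W
      = (3 * ρ + 1) / 2 * frobSq (G - Gst ρ T C₁ C₂ C₃ U V W)
        + (ρ / 2 * (MatrixAux.frobSq C₁ + MatrixAux.frobSq C₂ + MatrixAux.frobSq C₃)
            + 1 / 2 * Tensor.frobSq T
            - 1 / (2 * (3 * ρ + 1)) * frobSq (ρ • Bt C₁ C₂ C₃ + tucker T Uᵀ Vᵀ Wᵀ)) := by
  have hden : (3 * ρ + 1) ≠ 0 := by positivity
  unfold objFn Gst
  rw [frobSq_unfold1, frobSq_unfold2, frobSq_unfold3,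
    frobSq_sub T (tucker G U V W), frobSq_tucker G hU hV hW, tinner_comm T, tinner_tucker,
    frobSq_sub G, tinner_smul_right, frobSq_smul, tinner_add_right, tinner_smul_right]
  unfold Bt
  rw [tinner_add_right, tinner_add_right]
  field_simp
  ring
end Main
end Tensor
namespace Tensor
section Main2
variable {I₁ I₂ I₃ d₁ d₂ d₃ : ℕ}

lemma value_eq (ρ : ℝ) (hρ : 0 < ρ) (T : Tensor I₁ I₂ I₃)
    (C₁ : Matrix (Fin d₁) (Fin d₃ × Fin d₂) ℝ) (C₂ : Matrix (Fin d₂) (Fin d₃ × Fin d₁) ℝ)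
    (C₃ : Matrix (Fin d₃) (Fin d₂ × Fin d₁) ℝ)
    {U : Matrix (Fin I₁) (Fin d₁) ℝ} {V : Matrix (Fin I₂) (Fin d₂) ℝ}
    {W : Matrix (Fin I₃) (Fin d₃) ℝ}
    (hU : Uᵀ * U = 1) (hV : Vᵀ * V = 1) (hW : Wᵀ * W = 1) :
    objFn ρ T C₁ C₂ C₃ (Gst ρ T C₁ C₂ C₃ U V W) U V W
      = ρ / 2 * (MatrixAux.frobSq C₁ + MatrixAux.frobSq C₂ + MatrixAux.frobSq C₃)
          + 1 / 2 * Tensor.frobSq T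
          - 1 / (2 * (3 * ρ + 1)) * frobSq (ρ • Bt C₁ C₂ C₃ + tucker T Uᵀ Vᵀ Wᵀ) := by
  rw [key ρ hρ T C₁ C₂ C₃ hU hV hW, sub_self, frobSq_zero]
  ring

lemma min_le (ρ : ℝ) (hρ : 0 < ρ) (T : Tensor I₁ I₂ I₃)
    (C₁ : Matrix (Fin d₁) (Fin d₃ × Fin d₂) ℝ) (C₂ : Matrix (Fin d₂) (Fin d₃ × Fin d₁) ℝ)
    (C₃ : Matrix (Fin d₃) (Fin d₂ × Fin d₁) ℝ)
    {U : Matrix (Fin I₁) (Fin d₁) ℝ} {V : Matrix (Fin I₂) (Fin d₂) ℝ}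
    {W : Matrix (Fin I₃) (Fin d₃) ℝ}
    (hU : Uᵀ * U = 1) (hV : Vᵀ * V = 1) (hW : Wᵀ * W = 1) (G : Tensor d₁ d₂ d₃) :
    objFn ρ T C₁ C₂ C₃ (Gst ρ T C₁ C₂ C₃ U V W) U V W ≤ objFn ρ T C₁ C₂ C₃ G U V W := by
  rw [key ρ hρ T C₁ C₂ C₃ hU hV hW G, key ρ hρ T C₁ C₂ C₃ hU hV hW, sub_self, frobSq_zero]
  have h1 : (0:ℝ) ≤ (3 * ρ + 1) / 2 := by positivity
  have h2 := frobSq_nonneg (G - Gst ρ T C₁ C₂ C₃ U V W)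
  nlinarith

end Main2
end Tensor
/-- With `C = T ×₁ Uᵀ ×₂ Vᵀ ×₃ Wᵀ` and `B = ∑ₙ refoldₙ(Cₙ)`, the minimum over
`G` of `∑ₙ (ρ/2)‖G₍ₙ₎ − Cₙ‖²_F + (1/2)‖T − G ×₁ U ×₂ V ×₃ W‖²_F` equals
`(ρ/2)∑ₙ‖Cₙ‖²_F + (1/2)‖T‖²_F − (1/(2(3ρ+1)))‖ρB + C‖²_F`, attained at
`G = (ρB + C)/(3ρ+1)`; hence minimizing over column-orthonormal `(U,V,W)` is equivalent to
maximizing `g(U,V,W) = ‖C + ρB‖²_F`. -/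
theorem min_core_value_eq' {I₁ I₂ I₃ d₁ d₂ d₃ : ℕ} (ρ : ℝ) (hρ : 0 < ρ)
    (T : Tensor I₁ I₂ I₃)
    (C₁ : Matrix (Fin d₁) (Fin d₃ × Fin d₂) ℝ)
    (C₂ : Matrix (Fin d₂) (Fin d₃ × Fin d₁) ℝ)
    (C₃ : Matrix (Fin d₃) (Fin d₂ × Fin d₁) ℝ) :
    let obj : Tensor d₁ d₂ d₃ → Matrix (Fin I₁) (Fin d₁) ℝ → Matrix (Fin I₂) (Fin d₂) ℝ →
        Matrix (Fin I₃) (Fin d₃) ℝ → ℝ := fun G U V W =>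
      ρ / 2 * (MatrixAux.frobSq (Tensor.unfold1 G - C₁)
          + MatrixAux.frobSq (Tensor.unfold2 G - C₂)
          + MatrixAux.frobSq (Tensor.unfold3 G - C₃))
        + 1 / 2 * Tensor.frobSq (T - Tensor.tucker G U V W)
    let B : Tensor d₁ d₂ d₃ := Tensor.refold1 C₁ + Tensor.refold2 C₂ + Tensor.refold3 C₃
    let C : Matrix (Fin I₁) (Fin d₁) ℝ → Matrix (Fin I₂) (Fin d₂) ℝ →
        Matrix (Fin I₃) (Fin d₃) ℝ → Tensor d₁ d₂ d₃ := fun U V W => Tensor.tucker T Uᵀ Vᵀ Wᵀ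
    let Gstar : Matrix (Fin I₁) (Fin d₁) ℝ → Matrix (Fin I₂) (Fin d₂) ℝ →
        Matrix (Fin I₃) (Fin d₃) ℝ → Tensor d₁ d₂ d₃ := fun U V W =>
      (1 / (3 * ρ + 1)) • (ρ • B + C U V W)
    let g : Matrix (Fin I₁) (Fin d₁) ℝ → Matrix (Fin I₂) (Fin d₂) ℝ →
        Matrix (Fin I₃) (Fin d₃) ℝ → ℝ := fun U V W => Tensor.frobSq (C U V W + ρ • B)
    ∀ (U : Matrix (Fin I₁) (Fin d₁) ℝ) (V : Matrix (Fin I₂) (Fin d₂) ℝ)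
      (W : Matrix (Fin I₃) (Fin d₃) ℝ), Uᵀ * U = 1 → Vᵀ * V = 1 → Wᵀ * W = 1 →
      (∀ G, obj (Gstar U V W) U V W ≤ obj G U V W) ∧
      obj (Gstar U V W) U V W
        = ρ / 2 * (MatrixAux.frobSq C₁ + MatrixAux.frobSq C₂ + MatrixAux.frobSq C₃)
          + 1 / 2 * Tensor.frobSq T - 1 / (2 * (3 * ρ + 1)) * Tensor.frobSq (ρ • B + C U V W) ∧
      ∀ (U' : Matrix (Fin I₁) (Fin d₁) ℝ) (V' : Matrix (Fin I₂) (Fin d₂) ℝ)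
        (W' : Matrix (Fin I₃) (Fin d₃) ℝ), U'ᵀ * U' = 1 → V'ᵀ * V' = 1 → W'ᵀ * W' = 1 →
        (obj (Gstar U V W) U V W ≤ obj (Gstar U' V' W') U' V' W' ↔ g U' V' W' ≤ g U V W) := by
  intro obj B C Gstar g U V W hU hV hW
  have hc : (0:ℝ) < 1 / (2 * (3 * ρ + 1)) := by positivity
  refine ⟨?_, ?_, ?_⟩
  · intro G
    exact Tensor.min_le ρ hρ T C₁ C₂ C₃ hU hV hW G
  · exact Tensor.value_eq ρ hρ T C₁ C₂ C₃ hU hV hW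
  · intro U' V' W' hU' hV' hW'
    show Tensor.objFn ρ T C₁ C₂ C₃ (Tensor.Gst ρ T C₁ C₂ C₃ U V W) U V W
        ≤ Tensor.objFn ρ T C₁ C₂ C₃ (Tensor.Gst ρ T C₁ C₂ C₃ U' V' W') U' V' W'
      ↔ Tensor.frobSq (Tensor.tucker T U'ᵀ V'ᵀ W'ᵀ + ρ • Tensor.Bt C₁ C₂ C₃)
        ≤ Tensor.frobSq (Tensor.tucker T Uᵀ Vᵀ Wᵀ + ρ • Tensor.Bt C₁ C₂ C₃)
    rw [Tensor.value_eq ρ hρ T C₁ C₂ C₃ hU hV hW,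
      Tensor.value_eq ρ hρ T C₁ C₂ C₃ hU' hV' hW',
      add_comm (Tensor.tucker T U'ᵀ V'ᵀ W'ᵀ) (ρ • Tensor.Bt C₁ C₂ C₃),
      add_comm (Tensor.tucker T Uᵀ Vᵀ Wᵀ) (ρ • Tensor.Bt C₁ C₂ C₃),
      sub_le_sub_iff_left, mul_le_mul_iff_right₀ hc]
end
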